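/- For every positive integer n and every integer p, the sum over k from 0 to n of (-1)^{p(n-k)} * (n/(n+k)) * C(n+k, n-k) * 5^k * F_p^{2k} equals L_{2pn}/2. -/

import Mathlib

open Finset

/-- Fibonacci numbers extended to all integers: `F_{-n} = (-1)^{n-1} F_n`. -/
def fibZ (n : ℤ) : ℤ :=
  if 0 ≤ n then Nat.fib n.toNat else (-1) ^ (n.natAbs + 1) * Nat.fib n.natAbs

/-- Lucas numbers extended to all integers: `L_n = F_{n-1} + F_{n+1}`. -/
def lucasZ (n : ℤ) : ℤ := fibZ (n - 1) + fibZ (n + 1)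

open Real goldenRatio

lemma fibZ_binet (n : ℤ) : (fibZ n : ℝ) = (φ ^ n - ψ ^ n) / √5 := by
  rcases le_or_gt 0 n with h | h
  · rw [fibZ, if_pos h]
    lift n to ℕ using h
    rw [zpow_natCast, zpow_natCast, Int.toNat_natCast]
    exact_mod_cast Real.coe_fib_eq _
  · rw [fibZ, if_neg (not_le.2 h)]
    obtain ⟨m, rfl⟩ : ∃ m : ℕ, n = -(m:ℤ) := ⟨n.natAbs, by omega⟩
    have hm : (-(m:ℤ)).natAbs = m := by simp
    have h1 : φ ^ (-(m:ℤ)) = (-1:ℝ)^m * ψ^m := by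
      rw [zpow_neg, zpow_natCast, ← inv_pow, inv_goldenRatio, neg_pow]
    have h2 : ψ ^ (-(m:ℤ)) = (-1:ℝ)^m * φ^m := by
      rw [zpow_neg, zpow_natCast, ← inv_pow, inv_goldenConj, neg_pow]
    rw [hm, h1, h2]
    push_cast [Real.coe_fib_eq]
    ring

lemma lucasZ_binet (n : ℤ) : (lucasZ n : ℝ) = φ ^ n + ψ ^ n := by
  have h5 : √5 ≠ 0 := by positivity
  have hφ : φ ≠ 0 := goldenRatio_ne_zero
  have hψ : ψ ≠ 0 := goldenConj_ne_zero
  have e1 : φ ^ (n-1) = φ^n * φ⁻¹ := by rw [zpow_sub_one₀ hφ]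
  have e3 : ψ ^ (n-1) = ψ^n * ψ⁻¹ := by rw [zpow_sub_one₀ hψ]
  have e2 : φ ^ (n+1) = φ^n * φ := by rw [zpow_add_one₀ hφ]
  have e4 : ψ ^ (n+1) = ψ^n * ψ := by rw [zpow_add_one₀ hψ]
  rw [lucasZ]
  push_cast [fibZ_binet, e1, e2, e3, e4, inv_goldenRatio, inv_goldenConj]
  rw [← add_div, div_eq_iff h5]
  linear_combination (φ^n + ψ^n) * goldenRatio_sub_goldenConj

lemma lucasZ_zero : lucasZ 0 = 2 := by decide

/-- `L_{2p} = 5 F_p ^ 2 + 2 (-1)^p`. -/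
lemma lucasZ_two_mul (p : ℤ) :
    (lucasZ (2*p) : ℚ) = 5 * (fibZ p : ℚ)^2 + 2 * (-1:ℚ)^p := by
  have := @Rat.cast_injective ℝ _
  apply this
  push_cast [lucasZ_binet, fibZ_binet]
  have h5 : (√5:ℝ)^2 = 5 := Real.sq_sqrt (by norm_num)
  have hx : φ ^ (2*p) = (φ^p)^2 := by
    rw [mul_comm, zpow_mul]; norm_cast
  have hy : ψ ^ (2*p) = (ψ^p)^2 := by
    rw [mul_comm, zpow_mul]; norm_cast
  have huv : φ^p * ψ^p = (-1:ℝ)^p := by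
    rw [← mul_zpow, goldenRatio_mul_goldenConj]
  rw [hx, hy, div_pow, h5]
  linear_combination 2 * huv

/-- Lucas recurrence for `L_{2pn}`. -/
lemma lucasZ_rec (p : ℤ) (n : ℕ) :
    (lucasZ (2*p*((n:ℤ)+2)) : ℚ) =
      (lucasZ (2*p) : ℚ) * (lucasZ (2*p*((n:ℤ)+1)) : ℚ) - (lucasZ (2*p*(n:ℤ)) : ℚ) := by
  have := @Rat.cast_injective ℝ _
  apply this
  push_cast [lucasZ_binet]
  have hφ : φ ≠ 0 := goldenRatio_ne_zero
  have hψ : ψ ≠ 0 := goldenConj_ne_zero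
  have hx : ∀ m : ℤ, φ ^ (2*p*m) = (φ^(2*p))^m := by
    intro m; rw [zpow_mul]
  have hy : ∀ m : ℤ, ψ ^ (2*p*m) = (ψ^(2*p))^m := by
    intro m; rw [zpow_mul]
  set x := φ^(2*p) with hxdef
  set y := ψ^(2*p) with hydef
  have hx0 : x ≠ 0 := zpow_ne_zero _ hφ
  have hy0 : y ≠ 0 := zpow_ne_zero _ hψ
  have hxy : x * y = 1 := by
    rw [hxdef, hydef, ← mul_zpow, goldenRatio_mul_goldenConj, zpow_mul]
    norm_num
  rw [hx, hx, hx, hy, hy, hy]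
  have e : ∀ z : ℝ, z ≠ 0 → ∀ m : ℤ, z ^ (m+2) = z^m * z * z ∧ z^(m+1) = z^m * z := by
    intro z hz m
    constructor
    · rw [show m+2 = (m+1)+1 by ring, zpow_add_one₀ hz, zpow_add_one₀ hz]
    · rw [zpow_add_one₀ hz]
  obtain ⟨ex2, ex1⟩ := e x hx0 n
  obtain ⟨ey2, ey1⟩ := e y hy0 n
  rw [ex2, ex1, ey2, ey1]
  linear_combination (-x^(n:ℤ) - y^(n:ℤ)) * hxy

/-- integer coefficients `2·a(m+1,k)` -/
def Nb (m k : ℕ) : ℕ := (m+1+k).choose (2*k) + (m+k).choose (2*k)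

lemma pascal4 (M r : ℕ) :
    (M+3).choose (r+2) + (M+2).choose (r+2) + (M+1).choose (r+2) + M.choose (r+2) =
    (M+1).choose r + M.choose r + 2*((M+2).choose (r+2)) + 2*((M+1).choose (r+2)) := by
  simp [Nat.choose_succ_succ, show M+3 = (M+2)+1 from rfl, show M+2=(M+1)+1 from rfl]
  ring

lemma pascalB (m j : ℕ) :
    Nb (m+2) (j+1) + Nb m (j+1) = Nb (m+1) j + 2 * Nb (m+1) (j+1) := by
  have h := pascal4 (m+j+1) (2*j)
  simp only [Nb]
  have e1 : 2*(j+1) = 2*j+2 := by ring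
  rw [e1]
  have e2 : m+2+1+(j+1) = m+j+1+3 := by ring
  have e3 : m+2+(j+1) = m+j+1+2 := by ring
  have e4 : m+1+(j+1) = m+j+1+1 := by ring
  have e5 : m+(j+1) = m+j+1 := by ring
  have e6 : m+1+1+j = m+j+1+1 := by ring
  have e7 : m+1+j = m+j+1 := by ring
  rw [e2, e3, e4, e5, e6, e7]
  omega

lemma Nb_zero (m : ℕ) : Nb m 0 = 2 := by simp [Nb]

lemma Nb_top (m k : ℕ) (h : m + 2 ≤ k) : Nb m k = 0 := by
  rw [Nb, Nat.choose_eq_zero_of_lt (by omega), Nat.choose_eq_zero_of_lt (by omega)]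

noncomputable def Bq (m k : ℕ) : ℚ := (Nb m k : ℚ) / 2

noncomputable def Qp (t : ℚ) (m : ℕ) : ℚ := ∑ k ∈ range (m+2), Bq m k * t^k

/-- the coefficient identity in ℚ -/
lemma a_eq (m k : ℕ) (hk : k ≤ m+1) :
    ((m+1 : ℚ)) / ((m+1) + k) * ((m+1+k).choose (m+1-k)) = Bq m k := by
  have hsym : (m+1+k).choose (m+1-k) = (m+1+k).choose (2*k) := by
    have : m+1-k = (m+1+k) - 2*k := by omega
    rw [this, Nat.choose_symm (by omega)]
  have hcc := Nat.choose_mul_succ_eq (m+k) (2*k)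
  have hcc' : ((m+k).choose (2*k) : ℚ) * (m+k+1) = ((m+k+1).choose (2*k) : ℚ) * ((m+1:ℚ) - k) := by
    have hs : ((m+k+1-2*k : ℕ) : ℚ) = (m+1:ℚ) - k := by
      have : m+k+1-2*k = m+1-k := by omega
      rw [this, Nat.cast_sub (by omega)]
      push_cast; ring
    rw [← hs]
    exact_mod_cast congrArg (Nat.cast : ℕ → ℚ) hcc
  rw [hsym, Bq, Nb]
  have hne : ((m:ℚ)+1) + k ≠ 0 := by positivity
  rw [div_mul_eq_mul_div, div_eq_div_iff hne (by norm_num)]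
  have e : m+1+k = m+k+1 := by ring
  rw [e]
  push_cast
  linear_combination -hcc'

/-- recurrence for Q -/
lemma Qp_rec (t : ℚ) (m : ℕ) :
    Qp t (m+2) = (t + 2) * Qp t (m+1) - Qp t m := by
  have h1 : Qp t (m+1) = ∑ k ∈ range (m+4), Bq (m+1) k * t^k := by
    rw [Qp, Finset.sum_range_succ (fun k => Bq (m+1) k * t^k) (m+3)]
    have hz : Bq (m+1) (m+3) * t^(m+3) = 0 := by rw [Bq, Nb_top _ _ (by omega)]; norm_num
    rw [hz, add_zero]
  have h0 : Qp t m = ∑ k ∈ range (m+4), Bq m k * t^k := by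
    rw [Qp, Finset.sum_range_succ (fun k => Bq m k * t^k) (m+3),
        Finset.sum_range_succ (fun k => Bq m k * t^k) (m+2)]
    have hz1 : Bq m (m+3) * t^(m+3) = 0 := by rw [Bq, Nb_top _ _ (by omega)]; norm_num
    have hz2 : Bq m (m+2) * t^(m+2) = 0 := by rw [Bq, Nb_top _ _ (by omega)]; norm_num
    rw [hz1, hz2, add_zero, add_zero]
  have hA : Qp t (m+2) = ∑ k ∈ range (m+4), Bq (m+2) k * t^k := by
    rw [Qp]
  have shift2 :
      (∑ k ∈ range (m+4), (Bq (m+2) k * t^k + Bq m k * t^k - 2*(Bq (m+1) k * t^k)))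
      = ∑ k ∈ range (m+4), Bq (m+1) k * t^(k+1) := by
    rw [Finset.sum_range_succ (fun k => Bq (m+1) k * t^(k+1)) (m+3),
        Finset.sum_range_succ' (fun k => Bq (m+2) k * t^k + Bq m k * t^k - 2*(Bq (m+1) k * t^k)) (m+3)]
    have hz1 : Bq (m+1) (m+3) * t^(m+3+1) = 0 := by rw [Bq, Nb_top _ _ (by omega)]; norm_num
    have hz0 : Bq (m+2) 0 * t^0 + Bq m 0 * t^0 - 2*(Bq (m+1) 0 * t^0) = 0 := by
      norm_num [Bq, Nb_zero]
    rw [hz1, hz0, add_zero, add_zero]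
    refine Finset.sum_congr rfl fun j _ => ?_
    have hp : ((Nb (m+2) (j+1) : ℚ)) + (Nb m (j+1) : ℚ)
        = (Nb (m+1) j : ℚ) + 2 * (Nb (m+1) (j+1) : ℚ) := by
      exact_mod_cast congrArg (Nat.cast : ℕ → ℚ) (pascalB m j)
    simp only [Bq]
    linear_combination (t^(j+1)/2) * hp
  have dec : (∑ k ∈ range (m+4), (Bq (m+2) k * t^k + Bq m k * t^k - 2*(Bq (m+1) k * t^k)))
      = (∑ k ∈ range (m+4), Bq (m+2) k * t^k) + (∑ k ∈ range (m+4), Bq m k * t^k)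
        - 2 * ∑ k ∈ range (m+4), Bq (m+1) k * t^k := by
    rw [Finset.sum_sub_distrib, Finset.sum_add_distrib, Finset.mul_sum]
  have hE : (∑ k ∈ range (m+4), Bq (m+1) k * t^(k+1))
      = t * ∑ k ∈ range (m+4), Bq (m+1) k * t^k := by
    rw [Finset.mul_sum]; exact Finset.sum_congr rfl fun k _ => by ring
  rw [hA, h1, h0]
  linear_combination shift2 - dec + hE

theorem stmt_8 (n : ℕ) (hn : 0 < n) (p : ℤ) :
    ∑ k ∈ range (n + 1), (-1 : ℚ) ^ (p * ((n : ℤ) - k)) *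
      ((n : ℚ) / (n + k)) * (Nat.choose (n + k) (n - k)) *
      5 ^ k * (fibZ p : ℚ) ^ (2 * k) =
    (lucasZ (2 * p * n) : ℚ) / 2 := by
  obtain ⟨m, rfl⟩ : ∃ m, n = m + 1 := ⟨n - 1, by omega⟩
  set ε : ℚ := (-1:ℚ)^p with hε
  set c : ℚ := 5 * (fibZ p : ℚ)^2 with hc
  have hε2 : ε * ε = 1 := by
    rcases Int.even_or_odd p with h | h
    · rw [hε, h.neg_one_zpow]; norm_num
    · rw [hε, h.neg_one_zpow]; norm_num
  have hεpow : ∀ a b : ℕ, b ≤ a → ε^(a-b) = ε^a * ε^b := by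
    intro a b hba
    have h2b : ε^b * ε^b = 1 := by rw [← mul_pow, hε2, one_pow]
    calc ε^(a-b) = ε^(a-b) * (ε^b * ε^b) := by rw [h2b, mul_one]
      _ = ε^(a-b+b) * ε^b := by rw [pow_add]; ring
      _ = ε^a * ε^b := by rw [Nat.sub_add_cancel hba]
  set LL : ℕ → ℚ := fun i => ((lucasZ (2*p*(i:ℤ)) : ℤ) : ℚ) with hLL
  have hM : ((lucasZ (2*p) : ℤ) : ℚ) = c + 2*ε := by
    rw [lucasZ_two_mul, ← hc, ← hε]
  have hL1 : LL 1 = c + 2*ε := by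
    simp only [hLL, Nat.cast_one, mul_one]; exact hM
  have hL0 : LL 0 = 2 := by
    simp only [hLL, Nat.cast_zero, mul_zero, lucasZ_zero]; norm_num
  have hrecL : ∀ i : ℕ, LL (i+2) = ((lucasZ (2*p) : ℤ) : ℚ) * LL (i+1) - LL i := by
    intro i
    have e2 : ((i+2:ℕ):ℤ) = (i:ℤ)+2 := by push_cast; ring
    have e1 : ((i+1:ℕ):ℤ) = (i:ℤ)+1 := by push_cast; ring
    simp only [hLL, e2, e1]
    exact lucasZ_rec p i
  have main : ∀ j : ℕ, ε^(j+1) * Qp (ε*c) j = LL (j+1) / 2 ∧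
      ε^(j+2) * Qp (ε*c) (j+1) = LL (j+2) / 2 := by
    intro j
    induction j with
    | zero =>
      have v00 : Nb 0 0 = 2 := by decide
      have v01 : Nb 0 1 = 1 := by decide
      have v10 : Nb 1 0 = 2 := by decide
      have v11 : Nb 1 1 = 4 := by decide
      have v12 : Nb 1 2 = 1 := by decide
      have hQ0 : Qp (ε*c) 0 = 1 + (ε*c)/2 := by
        rw [Qp, Finset.sum_range_succ, Finset.sum_range_succ, Finset.sum_range_zero,
          Bq, Bq, v00, v01]
        push_cast
        ring
      have hQ1 : Qp (ε*c) 1 = 1 + 2*(ε*c) + (ε*c)^2/2 := by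
        rw [Qp, Finset.sum_range_succ, Finset.sum_range_succ, Finset.sum_range_succ,
          Finset.sum_range_zero, Bq, Bq, Bq, v10, v11, v12]
        push_cast
        ring
      have hL2 : LL 2 = (c+2*ε)*(c+2*ε) - 2 := by
        have h := hrecL 0
        norm_num at h
        rw [h, hM, hL1, hL0]
      constructor
      · show ε^1 * Qp (ε*c) 0 = LL 1 / 2
        rw [hQ0, hL1, pow_one]
        linear_combination (c/2) * hε2
      · show ε^2 * Qp (ε*c) 1 = LL 2 / 2
        rw [hQ1, hL2]
        linear_combination ((c^2/2)*(ε*ε+1) + 2*ε*c - 1) * hε2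
    | succ j ih =>
      obtain ⟨ih1, ih2⟩ := ih
      constructor
      · exact ih2
      · show ε^(j+3) * Qp (ε*c) (j+2) = LL (j+3) / 2
        rw [Qp_rec]
        have hr := hrecL (j+1)
        norm_num at hr
        rw [show j+1+2 = j+3 from rfl, show j+1+1 = j+2 from rfl] at hr
        linear_combination (c+2*ε)*ih2 - ih1 - (1/2)*hr - (LL (j+2)/2)*hM +
          (c*ε^(j+2)*Qp (ε*c) (j+1) - ε^(j+1)*Qp (ε*c) j)*hε2
  have sum_eq : ∑ k ∈ range (m + 1 + 1), (-1 : ℚ) ^ (p * (((m+1 : ℕ) : ℤ) - k)) *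
      (((m+1:ℕ) : ℚ) / ((m+1:ℕ) + k)) * (Nat.choose ((m+1) + k) ((m+1) - k)) *
      5 ^ k * (fibZ p : ℚ) ^ (2 * k) = ε^(m+1) * Qp (ε*c) m := by
    rw [Qp, Finset.mul_sum]
    refine Finset.sum_congr rfl fun k hk => ?_
    have hk' : k ≤ m + 1 := by
      rw [Finset.mem_range] at hk; omega
    have h1 : (-1:ℚ)^(p * (((m+1:ℕ):ℤ) - k)) = ε^(m+1) * ε^k := by
      have hz : ((m+1:ℕ):ℤ) - (k:ℤ) = ((m+1-k : ℕ) : ℤ) := by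
        push_cast [Nat.cast_sub hk']; ring
      rw [hz, zpow_mul, ← hε, zpow_natCast]
      exact hεpow (m+1) k hk'
    have hae := a_eq m k hk'
    have hck : (5:ℚ)^k * (fibZ p:ℚ)^(2*k) = c^k := by rw [hc, mul_pow, pow_mul]
    rw [h1, mul_pow ε c k]
    push_cast at hae ⊢
    linear_combination (ε^(m+1)*ε^k*(5:ℚ)^k*(fibZ p:ℚ)^(2*k)) * hae +
      (ε^(m+1)*ε^k*(Bq m k)) * hck
  rw [sum_eq]
  exact (main m).1
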